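/- For every integer $n\geq 5$, $\frac{(n-1)!/n^{n-1}}{(n-2)!^{n-2}/(n(n-2))!} \geq 2^{n-5}(n-2)^{n-4}\big(n(n-2)\big)^{\frac{n(n-2)}{16}}$. -/

import Mathlib

open Real

lemma pow_le_fac_mul_exp (k : ℕ) : (k:ℝ)^k ≤ k.factorial * Real.exp k := by
  induction k with
  | zero => simp
  | succ k ih =>
    rcases Nat.eq_zero_or_pos k with h | h
    · subst h; simpa using Real.one_le_exp (by norm_num)
    have hk0 : (0:ℝ) < k := by exact_mod_cast h
    have h1 : ((k:ℝ)+1) ≤ k * Real.exp (1/k) := by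
      calc ((k:ℝ)+1) = k * (1/k + 1) := by field_simp; ring
        _ ≤ k * Real.exp (1/k) := by nlinarith [Real.add_one_le_exp (1/(k:ℝ))]
    have h2 : ((k:ℝ)+1)^k ≤ (k:ℝ)^k * Real.exp 1 := by
      calc ((k:ℝ)+1)^k ≤ ((k:ℝ) * Real.exp (1/k))^k := by
            apply pow_le_pow_left₀ (by positivity) h1
        _ = (k:ℝ)^k * (Real.exp (1/k))^k := by rw [mul_pow]
        _ = (k:ℝ)^k * Real.exp 1 := by
            rw [← Real.exp_nat_mul]
            congr 1
            field_simp
    have hfac : (0:ℝ) < k.factorial := by exact_mod_cast k.factorial_pos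
    push_cast
    calc ((k:ℝ)+1)^(k+1) = ((k:ℝ)+1) * ((k:ℝ)+1)^k := by ring
      _ ≤ ((k:ℝ)+1) * ((k:ℝ)^k * Real.exp 1) := by
          apply mul_le_mul_of_nonneg_left h2 (by positivity)
      _ ≤ ((k:ℝ)+1) * ((k.factorial * Real.exp k) * Real.exp 1) := by
          apply mul_le_mul_of_nonneg_left (by nlinarith [Real.exp_pos (1:ℝ)]) (by positivity)
      _ = (k+1).factorial * Real.exp ((k:ℝ)+1) := by
          rw [Nat.factorial_succ, Real.exp_add]
          push_cast; ring

lemma fac_mul_exp_le (k : ℕ) (hk : 1 ≤ k) :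
    (k.factorial:ℝ) * Real.exp k ≤ Real.exp 1 * k * (k:ℝ)^k := by
  induction k, hk using Nat.le_induction with
  | base => simp
  | succ k hk ih =>
    have hk0 : (0:ℝ) < k := by exact_mod_cast hk
    -- key: exp 1 * k^(k+1) ≤ (k+1)^(k+1)
    have h1 : (k:ℝ) ≤ ((k:ℝ)+1) * Real.exp (-(1/((k:ℝ)+1))) := by
      have h0 := Real.add_one_le_exp (-(1/((k:ℝ)+1)))
      have h2 : (k:ℝ)/((k:ℝ)+1) = -(1/((k:ℝ)+1)) + 1 := by field_simp; ring
      have h3 : (k:ℝ)/((k:ℝ)+1) ≤ Real.exp (-(1/((k:ℝ)+1))) := by rw [h2]; exact h0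
      calc (k:ℝ) = ((k:ℝ)/((k:ℝ)+1)) * ((k:ℝ)+1) := by field_simp
        _ ≤ Real.exp (-(1/((k:ℝ)+1))) * ((k:ℝ)+1) :=
            mul_le_mul_of_nonneg_right h3 (by positivity)
        _ = ((k:ℝ)+1) * Real.exp (-(1/((k:ℝ)+1))) := by ring
    have hkey : Real.exp 1 * (k:ℝ)^(k+1) ≤ ((k:ℝ)+1)^(k+1) := by
      have h3 : (k:ℝ)^(k+1) ≤ (((k:ℝ)+1) * Real.exp (-(1/((k:ℝ)+1))))^(k+1) :=
        pow_le_pow_left₀ (by positivity) h1 _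
      have h4 : (((k:ℝ)+1) * Real.exp (-(1/((k:ℝ)+1))))^(k+1)
          = ((k:ℝ)+1)^(k+1) * Real.exp (-1) := by
        rw [mul_pow, ← Real.exp_nat_mul]
        congr 2
        field_simp
        push_cast; ring
      rw [h4] at h3
      have := Real.exp_pos (1:ℝ)
      calc Real.exp 1 * (k:ℝ)^(k+1) ≤ Real.exp 1 * (((k:ℝ)+1)^(k+1) * Real.exp (-1)) := by
            apply mul_le_mul_of_nonneg_left h3 (by positivity)
        _ = (Real.exp 1 * Real.exp (-1)) * ((k:ℝ)+1)^(k+1) := by ring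
        _ = ((k:ℝ)+1)^(k+1) := by rw [← Real.exp_add]; simp
    push_cast
    calc ((k+1).factorial:ℝ) * Real.exp ((k:ℝ)+1)
        = ((k:ℝ)+1) * ((k.factorial:ℝ) * Real.exp k) * Real.exp 1 := by
          rw [Nat.factorial_succ, Real.exp_add]; push_cast; ring
      _ ≤ ((k:ℝ)+1) * (Real.exp 1 * k * (k:ℝ)^k) * Real.exp 1 := by
          have := Real.exp_pos (1:ℝ)
          apply mul_le_mul_of_nonneg_right _ (le_of_lt this)
          apply mul_le_mul_of_nonneg_left ih (by positivity)
      _ = ((k:ℝ)+1) * Real.exp 1 * (Real.exp 1 * (k:ℝ)^(k+1)) := by ring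
      _ ≤ ((k:ℝ)+1) * Real.exp 1 * ((k:ℝ)+1)^(k+1) := by
          apply mul_le_mul_of_nonneg_left hkey (by positivity)
      _ = Real.exp 1 * ((k:ℝ)+1) * ((k:ℝ)+1)^(k+1) := by ring

set_option maxHeartbeats 1000000 in
theorem stmt_14 (n : ℕ) (hn : 5 ≤ n) :
    (2 : ℝ) ^ (n - 5) * ((n : ℝ) - 2) ^ (n - 4) *
        ((n : ℝ) * ((n : ℝ) - 2)) ^ (((n : ℝ) * ((n : ℝ) - 2)) / 16) ≤
      ((Nat.factorial (n - 1) : ℝ) / (n : ℝ) ^ (n - 1)) /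
        ((Nat.factorial (n - 2) : ℝ) ^ (n - 2) / (Nat.factorial (n * (n - 2)) : ℝ)) := by
  obtain ⟨k, rfl⟩ : ∃ k, n = k + 5 := ⟨n - 5, by omega⟩
  rw [show k + 5 - 5 = k from by omega, show k + 5 - 4 = k + 1 from by omega,
    show k + 5 - 1 = k + 4 from by omega, show k + 5 - 2 = k + 3 from by omega,
    show ((k + 5 : ℕ) : ℝ) - 2 = (k : ℝ) + 3 from by push_cast; ring,
    show ((k + 5 : ℕ) : ℝ) = (k : ℝ) + 5 from by push_cast; ring]
  have hK0 : (0:ℝ) ≤ (k:ℝ) := Nat.cast_nonneg k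
  set K : ℝ := (k:ℝ) with hKdef
  set R : ℝ := (K + 5) * (K + 3) with hRdef
  have hR15 : (15:ℝ) ≤ R := by nlinarith
  have hR0 : (0:ℝ) < R := by nlinarith
  have hR1 : (1:ℝ) ≤ R := by nlinarith
  have hRN : ((((k+5)*(k+3) : ℕ)) : ℝ) = R := by push_cast; ring
  have hF1 : (1:ℝ) ≤ ((k+4).factorial : ℝ) := by exact_mod_cast (k+4).factorial_pos
  have hF3 : (0:ℝ) < (((k+5)*(k+3)).factorial : ℝ) := by
    exact_mod_cast ((k+5)*(k+3)).factorial_pos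
  have hQ0 : (0:ℝ) < ((k+3).factorial : ℝ) := by exact_mod_cast (k+3).factorial_pos
  have hQ : (0:ℝ) < ((k+3).factorial : ℝ)^(k+3) := by positivity
  have hP : (0:ℝ) < (K+5)^(k+4) := by positivity
  set A : ℝ := 2 ^ k * (K + 3) ^ (k + 1) * R ^ (R / 16) with hAdef
  have hA0 : 0 ≤ A := by
    rw [hAdef]
    have := Real.rpow_nonneg hR0.le (R/16)
    positivity
  rw [le_div_iff₀ (by positivity), ← mul_div_assoc, div_le_div_iff₀ hF3 hP]
  -- goal : A * fac(k+3)^(k+3) * (K+5)^(k+4) ≤ fac(k+4) * fac((k+5)(k+3))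
  have key : ∀ (b c : ℝ) (t : ℕ), 0 ≤ b → b ≤ R ^ c → b ^ t ≤ R ^ (c * t) := by
    intro b c t hb hbc
    calc b ^ t ≤ (R ^ c) ^ t := pow_le_pow_left₀ hb hbc t
      _ = R ^ (c * t) := by rw [← Real.rpow_natCast (R ^ c) t, ← Real.rpow_mul hR0.le]
  have h2R : (2:ℝ) ≤ R ^ ((1:ℝ)/3) := by
    have h8 : ((2:ℝ)^(3:ℕ)) ≤ R := by norm_num; nlinarith
    calc (2:ℝ) = ((2:ℝ)^(3:ℕ)) ^ ((1:ℝ)/3) := by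
          rw [← Real.rpow_natCast 2 3, ← Real.rpow_mul (by norm_num)]; norm_num
      _ ≤ R ^ ((1:ℝ)/3) := Real.rpow_le_rpow (by positivity) h8 (by norm_num)
  have h3R : K + 3 ≤ R ^ ((1:ℝ)/2) := by
    have hsq : (K+3)^(2:ℕ) ≤ R := by nlinarith
    calc K + 3 = ((K+3)^(2:ℕ)) ^ ((1:ℝ)/2) := by
          rw [← Real.rpow_natCast (K+3) 2, ← Real.rpow_mul (by positivity)]
          norm_num
      _ ≤ R ^ ((1:ℝ)/2) := Real.rpow_le_rpow (by positivity) hsq (by norm_num)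
  have h5R : K + 5 ≤ R ^ ((1:ℝ)) := by rw [Real.rpow_one]; nlinarith
  have hER : Real.exp 1 ≤ R ^ ((3:ℝ)/8) := by
    have hE8 : Real.exp 1 ^ (8:ℕ) ≤ R ^ (3:ℕ) := by
      calc Real.exp 1 ^ (8:ℕ) ≤ (2.7182818286:ℝ) ^ (8:ℕ) :=
            pow_le_pow_left₀ (Real.exp_pos 1).le Real.exp_one_lt_d9.le 8
        _ ≤ (15:ℝ)^(3:ℕ) := by norm_num
        _ ≤ R ^ (3:ℕ) := pow_le_pow_left₀ (by norm_num) hR15 3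
    calc Real.exp 1 = (Real.exp 1 ^ (8:ℕ)) ^ ((1:ℝ)/8) := by
          rw [← Real.rpow_natCast (Real.exp 1) 8, ← Real.rpow_mul (Real.exp_pos 1).le]
          norm_num
      _ ≤ (R ^ (3:ℕ)) ^ ((1:ℝ)/8) := Real.rpow_le_rpow (by positivity) hE8 (by norm_num)
      _ = R ^ ((3:ℝ)/8) := by
          rw [← Real.rpow_natCast R 3, ← Real.rpow_mul hR0.le]; norm_num
  have hfacN : R ^ ((k+5)*(k+3) : ℕ) ≤ (((k+5)*(k+3)).factorial : ℝ) * Real.exp R := by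
    have h := pow_le_fac_mul_exp ((k+5)*(k+3))
    rwa [hRN] at h
  have hfacm : ((k+3).factorial : ℝ) * Real.exp (K+3) ≤ Real.exp 1 * (K+3) * (K+3)^(k+3) := by
    have h := fac_mul_exp_le (k+3) (by omega)
    have hc : ((k+3 : ℕ) : ℝ) = K + 3 := by push_cast; ring
    rwa [hc] at h
  have hQbound : ((k+3).factorial : ℝ)^(k+3) * Real.exp ((K+3)*(K+3))
      ≤ Real.exp 1 ^ (k+3) * (K+3) ^ ((k+4)*(k+3)) := by
    have hc : ((k+3 : ℕ) : ℝ) * (K+3) = (K+3)*(K+3) := by push_cast; ring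
    calc ((k+3).factorial : ℝ)^(k+3) * Real.exp ((K+3)*(K+3))
        = (((k+3).factorial : ℝ) * Real.exp (K+3))^(k+3) := by
          rw [mul_pow, ← Real.exp_nat_mul, hc]
      _ ≤ (Real.exp 1 * (K+3) * (K+3)^(k+3))^(k+3) :=
          pow_le_pow_left₀ (by positivity) hfacm _
      _ = Real.exp 1 ^ (k+3) * ((K+3) ^ (k+3) * (K+3)^((k+3)*(k+3))) := by
          rw [mul_pow, mul_pow, ← pow_mul, mul_assoc]
      _ = Real.exp 1 ^ (k+3) * (K+3) ^ ((k+4)*(k+3)) := by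
          rw [← pow_add]
          congr 1
          ring
  suffices hmain : (A * ((k+3).factorial : ℝ)^(k+3) * (K+5)^(k+4)) * Real.exp R
      ≤ R ^ ((k+5)*(k+3)) by
    have h1 : (A * ((k+3).factorial : ℝ)^(k+3) * (K+5)^(k+4)) * Real.exp R
        ≤ (((k+5)*(k+3)).factorial : ℝ) * Real.exp R := hmain.trans hfacN
    have h2 : A * ((k+3).factorial : ℝ)^(k+3) * (K+5)^(k+4)
        ≤ (((k+5)*(k+3)).factorial : ℝ) := le_of_mul_le_mul_right h1 (Real.exp_pos R)
    calc A * ((k+3).factorial : ℝ)^(k+3) * (K+5)^(k+4)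
        ≤ (((k+5)*(k+3)).factorial : ℝ) := h2
      _ ≤ ((k+4).factorial : ℝ) * (((k+5)*(k+3)).factorial : ℝ) :=
          le_mul_of_one_le_left hF3.le hF1
  have hexp : Real.exp R = Real.exp ((K+3)*(K+3)) * Real.exp (2*K+6) := by
    rw [← Real.exp_add]; congr 1; rw [hRdef]; ring
  have hEmerge : Real.exp 1 ^ (k+3) * Real.exp (2*K+6) = Real.exp 1 ^ (3*k+9) := by
    rw [← Real.exp_nat_mul, ← Real.exp_nat_mul, ← Real.exp_add]
    congr 1; push_cast; ring
  calc (A * ((k+3).factorial : ℝ)^(k+3) * (K+5)^(k+4)) * Real.exp R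
      = (2 ^ k * (K+3)^(k+1) * (K+5)^(k+4) * Real.exp (2*K+6) * R ^ (R/16))
          * (((k+3).factorial : ℝ)^(k+3) * Real.exp ((K+3)*(K+3))) := by
        rw [hAdef, hexp]; ring
    _ ≤ (2 ^ k * (K+3)^(k+1) * (K+5)^(k+4) * Real.exp (2*K+6) * R ^ (R/16))
          * (Real.exp 1 ^ (k+3) * (K+3) ^ ((k+4)*(k+3))) := by
        apply mul_le_mul_of_nonneg_left hQbound
        have := Real.rpow_nonneg hR0.le (R/16)
        positivity
    _ = 2 ^ k * (K+3)^(k+1+(k+4)*(k+3)) * (K+5)^(k+4)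
          * (Real.exp 1 ^ (k+3) * Real.exp (2*K+6)) * R ^ (R/16) := by
        rw [pow_add]; ring
    _ = 2 ^ k * (K+3)^(k+1+(k+4)*(k+3)) * (K+5)^(k+4)
          * Real.exp 1 ^ (3*k+9) * R ^ (R/16) := by rw [hEmerge]
    _ ≤ R ^ ((1:ℝ)/3 * k) * R ^ ((1:ℝ)/2 * (k+1+(k+4)*(k+3))) * R ^ ((1:ℝ) * (k+4))
          * R ^ ((3:ℝ)/8 * (3*k+9)) * R ^ (R/16) := by
        have b1 := key 2 ((1:ℝ)/3) k (by norm_num) h2R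
        have b2 := key (K+3) ((1:ℝ)/2) (k+1+(k+4)*(k+3)) (by positivity) h3R
        have b3 := key (K+5) (1:ℝ) (k+4) (by positivity) h5R
        have b4 := key (Real.exp 1) ((3:ℝ)/8) (3*k+9) (Real.exp_pos 1).le hER
        push_cast at b1 b2 b3 b4
        gcongr ?_ * ?_ * ?_ * ?_ * ?_ <;>
          first
            | exact b1 | exact b2 | exact b3 | exact b4 | exact le_refl _
    _ = R ^ ((1:ℝ)/3 * k + (1:ℝ)/2 * (k+1+(k+4)*(k+3)) + (1:ℝ) * (k+4)
          + (3:ℝ)/8 * (3*k+9) + R/16) := by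
        rw [← Real.rpow_add hR0, ← Real.rpow_add hR0, ← Real.rpow_add hR0,
          ← Real.rpow_add hR0]
    _ ≤ R ^ ((((k+5)*(k+3) : ℕ)) : ℝ) := by
        apply Real.rpow_le_rpow_of_exponent_le hR1
        rw [hRN, hRdef]
        push_cast
        nlinarith [hK0, sq_nonneg K]
    _ = R ^ ((k+5)*(k+3)) := Real.rpow_natCast R _
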